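/- Let f : ℚ^r → ℝ ∪ {∞} be a convex function over ℚ (f(t·x + (1−t)·y) ≤ t·f(x) + (1−t)·f(y) for all x,y ∈ ℚ^r and t ∈ [0,1] ∩ ℚ) which is real-valued on an open box (−c, ∞)^r ∩ ℚ^r for some c > 0. Then there exists a continuous function f̃ : (−c, ∞)^r → ℝ with f̃ = f on (−c, ∞)^r ∩ ℚ^r. In particular, lim_{x→0, x∈ℚ^r} f(x) = f(0). -/

import Mathlib

open Filter Topology

namespace Stmt18

variable {r : ℕ}

/-- The real value of `f`. -/
noncomputable def F (f : (Fin r → ℚ) → WithTop ℝ) (x : Fin r → ℚ) : ℝ := WithTop.untopD 0 (f x)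

/-- The embedding of rational vectors into real vectors. -/
def emb (x : Fin r → ℚ) : Fin r → ℝ := fun i => (x i : ℝ)

/-- The open box. -/
def box (c : ℝ) : Set (Fin r → ℝ) := {z | ∀ i, -c < z i}

def ConvHyp (f : (Fin r → ℚ) → WithTop ℝ) : Prop :=
  ∀ x y : Fin r → ℚ, ∀ t : ℚ, 0 ≤ t → t ≤ 1 →
      f (t • x + (1 - t) • y) ≤ ((t : ℝ) : WithTop ℝ) * f x
        + (((1 - t : ℚ) : ℝ) : WithTop ℝ) * f y

def RealHyp (f : (Fin r → ℚ) → WithTop ℝ) (c : ℝ) : Prop :=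
  ∀ x : Fin r → ℚ, (∀ i, -c < (x i : ℝ)) → f x ≠ ⊤

section

variable {f : (Fin r → ℚ) → WithTop ℝ} {c : ℝ}

lemma f_eq (hreal : RealHyp f c) (x : Fin r → ℚ) (hx : emb x ∈ box c) :
    f x = ((F f x : ℝ) : WithTop ℝ) := by
  obtain ⟨y, hy⟩ := WithTop.ne_top_iff_exists.mp (hreal x hx)
  rw [F, ← hy, WithTop.untopD_coe]

lemma mem_box_comb (x y : Fin r → ℚ) (hx : emb x ∈ box c) (hy : emb y ∈ box c)
    (t : ℚ) (ht0 : 0 ≤ t) (ht1 : t ≤ 1) : emb (t • x + (1 - t) • y) ∈ box c := by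
  intro i
  have h1 : (0:ℝ) ≤ (t:ℝ) := by exact_mod_cast ht0
  have h2 : (0:ℝ) ≤ 1 - (t:ℝ) := by
    have : (t:ℝ) ≤ 1 := by exact_mod_cast ht1
    linarith
  have h3 := convex_Ioi (-c) (hx i) (hy i) h1 h2 (by ring)
  have h4 : emb (t • x + (1 - t) • y) i = (t:ℝ) * (x i:ℝ) + (1 - (t:ℝ)) * (y i:ℝ) := by
    simp only [emb, Pi.add_apply, Pi.smul_apply, smul_eq_mul]
    push_cast
    ring
  show -c < emb (t • x + (1 - t) • y) i
  rw [h4]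
  simpa [smul_eq_mul, emb] using h3

lemma Fconv (hconv : ConvHyp f) (hreal : RealHyp f c)
    (x y : Fin r → ℚ) (hx : emb x ∈ box c) (hy : emb y ∈ box c)
    (t : ℚ) (ht0 : 0 ≤ t) (ht1 : t ≤ 1) :
    F f (t • x + (1 - t) • y) ≤ (t:ℝ) * F f x + (1 - (t:ℝ)) * F f y := by
  have h := hconv x y t ht0 ht1
  rw [f_eq hreal x hx, f_eq hreal y hy, f_eq hreal _ (mem_box_comb x y hx hy t ht0 ht1)] at h
  rw [← WithTop.coe_mul, ← WithTop.coe_mul, ← WithTop.coe_add, WithTop.coe_le_coe] at h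
  push_cast at h
  linarith

lemma mem_box_near (x0 : Fin r → ℚ) (δ : ℚ) (hbox : ∀ i, -c < (x0 i : ℝ) - 2*(δ:ℝ))
    (q : Fin r → ℚ) (hq : ∀ i, |q i - x0 i| ≤ 2*δ) : emb q ∈ box c := by
  intro i
  have h := (abs_le.mp (hq i)).1
  have h' : (x0 i:ℝ) - 2*(δ:ℝ) ≤ (q i:ℝ) := by exact_mod_cast (by linarith : x0 i - 2*δ ≤ q i)
  exact lt_of_lt_of_le (hbox i) h'

lemma exists_M (hconv : ConvHyp f) (hreal : RealHyp f c)
    (x0 : Fin r → ℚ) (δ : ℚ) (hδ : 0 < δ)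
    (hbox : ∀ i, -c < (x0 i:ℝ) - 2*(δ:ℝ)) :
    ∃ M : ℝ, ∀ q : Fin r → ℚ, (∀ i, |q i - x0 i| ≤ 2*δ) → F f q ≤ M := by
  classical
  set corner : (Fin r → Bool) → (Fin r → ℚ) :=
    fun σ i => if σ i then x0 i + 2*δ else x0 i - 2*δ with hcornerdef
  have hne : (Finset.univ : Finset (Fin r → Bool)).Nonempty := Finset.univ_nonempty
  set Mv : ℝ := Finset.univ.sup' hne (fun σ => F f (corner σ)) with hMvdef
  have key : ∀ s : Finset (Fin r), ∀ q : Fin r → ℚ,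
      (∀ i, |q i - x0 i| ≤ 2*δ) → (∀ i, i ∉ s → q i = x0 i - 2*δ ∨ q i = x0 i + 2*δ) →
      F f q ≤ Mv := by
    intro s
    induction s using Finset.induction_on with
    | empty =>
      intro q hq hcor
      have hq_eq : q = corner (fun i => decide (q i = x0 i + 2*δ)) := by
        funext i
        rcases hcor i (Finset.notMem_empty i) with h | h
        · have hne2 : ¬ (q i = x0 i + 2*δ) := by rw [h]; intro hh; linarith
          simp only [hcornerdef, decide_eq_true_eq]
          rw [if_neg hne2, h]
        · simp only [hcornerdef, decide_eq_true_eq]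
          rw [if_pos h, h]
      rw [hq_eq]
      exact Finset.le_sup' (fun σ => F f (corner σ)) (Finset.mem_univ _)
    | @insert j s hj ih =>
      intro q hq hcor
      have hqj := abs_le.mp (hq j)
      have haj : |(x0 j - 2*δ) - x0 j| ≤ 2*δ := by
        rw [show x0 j - 2*δ - x0 j = -(2*δ) by ring, abs_neg, abs_of_nonneg (by linarith)]
      have hbj : |(x0 j + 2*δ) - x0 j| ≤ 2*δ := by
        rw [show x0 j + 2*δ - x0 j = 2*δ by ring, abs_of_nonneg (by linarith)]
      set qa := Function.update q j (x0 j - 2*δ) with hqadef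
      set qb := Function.update q j (x0 j + 2*δ) with hqbdef
      have hqaq : ∀ i, |qa i - x0 i| ≤ 2*δ := by
        intro i
        by_cases hij : i = j
        · subst hij; simpa [hqadef] using haj
        · simpa [hqadef, Function.update_of_ne hij] using hq i
      have hqbq : ∀ i, |qb i - x0 i| ≤ 2*δ := by
        intro i
        by_cases hij : i = j
        · subst hij; simpa [hqbdef] using hbj
        · simpa [hqbdef, Function.update_of_ne hij] using hq i
      set t : ℚ := ((x0 j + 2*δ) - q j)/(4*δ) with htdef
      have h4δ : (0:ℚ) < 4*δ := by linarith
      have ht0 : 0 ≤ t := div_nonneg (by linarith) (by linarith)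
      have ht1 : t ≤ 1 := by rw [div_le_one h4δ]; linarith
      have hcomb : t • qa + (1 - t) • qb = q := by
        funext i
        simp only [Pi.add_apply, Pi.smul_apply, smul_eq_mul]
        by_cases hij : i = j
        · subst hij
          simp only [hqadef, hqbdef, Function.update_self, htdef]
          field_simp
          ring
        · simp only [hqadef, hqbdef, Function.update_of_ne hij]
          ring
      have hF := Fconv hconv hreal qa qb (mem_box_near x0 δ hbox qa hqaq)
        (mem_box_near x0 δ hbox qb hqbq) t ht0 ht1
      rw [hcomb] at hF
      have hA : F f qa ≤ Mv := by
        apply ih qa hqaq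
        intro i hi
        by_cases hij : i = j
        · subst hij; left; simp [hqadef]
        · rw [hqadef, Function.update_of_ne hij]
          exact hcor i (by simp [Finset.mem_insert, hij, hi])
      have hB : F f qb ≤ Mv := by
        apply ih qb hqbq
        intro i hi
        by_cases hij : i = j
        · subst hij; right; simp [hqbdef]
        · rw [hqbdef, Function.update_of_ne hij]
          exact hcor i (by simp [Finset.mem_insert, hij, hi])
      have htr0 : (0:ℝ) ≤ (t:ℝ) := by exact_mod_cast ht0
      have htr1 : (t:ℝ) ≤ 1 := by exact_mod_cast ht1
      have p1 : (t:ℝ) * F f qa ≤ (t:ℝ) * Mv := mul_le_mul_of_nonneg_left hA htr0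
      have p2 : (1 - (t:ℝ)) * F f qb ≤ (1 - (t:ℝ)) * Mv :=
        mul_le_mul_of_nonneg_left hB (by linarith)
      calc F f q ≤ (t:ℝ) * F f qa + (1 - (t:ℝ)) * F f qb := hF
        _ ≤ (t:ℝ) * Mv + (1 - (t:ℝ)) * Mv := add_le_add p1 p2
        _ = Mv := by ring
  exact ⟨Mv, fun q hq => key Finset.univ q hq (fun i hi => absurd (Finset.mem_univ i) hi)⟩

lemma exists_Mm (hconv : ConvHyp f) (hreal : RealHyp f c)
    (x0 : Fin r → ℚ) (δ : ℚ) (hδ : 0 < δ)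
    (hbox : ∀ i, -c < (x0 i:ℝ) - 2*(δ:ℝ)) :
    ∃ M : ℝ, (∀ q : Fin r → ℚ, (∀ i, |q i - x0 i| ≤ 2*δ) → F f q ≤ M) ∧
      (∀ q : Fin r → ℚ, (∀ i, |q i - x0 i| ≤ 2*δ) → 2 * F f x0 - M ≤ F f q) := by
  obtain ⟨M, hM⟩ := exists_M hconv hreal x0 δ hδ hbox
  refine ⟨M, hM, ?_⟩
  intro q hq
  set q' : Fin r → ℚ := fun i => 2 * x0 i - q i with hq'def
  have hq' : ∀ i, |q' i - x0 i| ≤ 2*δ := by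
    intro i
    have : q' i - x0 i = -(q i - x0 i) := by rw [hq'def]; ring
    rw [this, abs_neg]
    exact hq i
  have hx0eq : (1/2 : ℚ) • q + (1 - 1/2 : ℚ) • q' = x0 := by
    funext i
    simp only [Pi.add_apply, Pi.smul_apply, smul_eq_mul, hq'def]
    ring
  have hF := Fconv hconv hreal q q' (mem_box_near x0 δ hbox q hq)
    (mem_box_near x0 δ hbox q' hq') (1/2) (by norm_num) (by norm_num)
  rw [hx0eq] at hF
  have hq'M := hM q' hq'
  push_cast at hF
  norm_num at hF
  linarith

lemma lip (hconv : ConvHyp f) (hreal : RealHyp f c)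
    (x0 : Fin r → ℚ) (δ : ℚ) (hδ : 0 < δ)
    (hbox : ∀ i, -c < (x0 i:ℝ) - 2*(δ:ℝ)) :
    ∃ K : ℝ, 0 ≤ K ∧ ∀ x y : Fin r → ℚ, (∀ i, |x i - x0 i| ≤ δ) → (∀ i, |y i - x0 i| ≤ δ) →
      ∀ D : ℝ, 0 ≤ D → (∀ i, |(x i:ℝ) - (y i:ℝ)| ≤ D) → |F f x - F f y| ≤ K * D := by
  obtain ⟨M, hM, hm⟩ := exists_Mm hconv hreal x0 δ hδ hbox
  have hδR : (0:ℝ) < (δ:ℝ) := by exact_mod_cast hδ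
  have hx0ball : ∀ i, |x0 i - x0 i| ≤ 2*δ := by intro i; simp; positivity
  have hle1 : 2 * F f x0 - M ≤ F f x0 := hm x0 hx0ball
  have hle2 : F f x0 ≤ M := hM x0 hx0ball
  set m : ℝ := 2 * F f x0 - M with hmdef
  set K : ℝ := (M - m)/(δ:ℝ) with hKdef
  have hMm : (0:ℝ) ≤ M - m := by rw [hmdef]; linarith
  have hK : 0 ≤ K := div_nonneg hMm hδR.le
  refine ⟨K, hK, ?_⟩
  have S : ∀ x y : Fin r → ℚ, (∀ i, |x i - x0 i| ≤ δ) → (∀ i, |y i - x0 i| ≤ δ) →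
      ∀ D:ℝ, 0 ≤ D → (∀ i, |(x i:ℝ) - (y i:ℝ)| ≤ D) → F f y - F f x ≤ K * D := by
    intro x y hx hy D hD hxyD
    by_cases hxy : x = y
    · subst hxy; simp; positivity
    · obtain ⟨i0, hi0⟩ := Function.ne_iff.mp hxy
      haveI : Nonempty (Fin r) := ⟨i0⟩
      set d : ℚ := Finset.univ.sup' Finset.univ_nonempty (fun i => |x i - y i|) with hddef
      have hdle : ∀ i, |x i - y i| ≤ d := fun i =>
        Finset.le_sup' (fun i => |x i - y i|) (Finset.mem_univ i)
      have hdpos : 0 < d :=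
        lt_of_lt_of_le (abs_pos.mpr (sub_ne_zero.mpr hi0)) (hdle i0)
      have hdD : (d:ℝ) ≤ D := by
        obtain ⟨j, -, hj⟩ := Finset.exists_mem_eq_sup' (Finset.univ_nonempty)
          (fun i => |x i - y i|)
        rw [hddef, hj]
        calc ((|x j - y j| : ℚ) : ℝ) = |(x j:ℝ) - (y j:ℝ)| := by push_cast; rfl
          _ ≤ D := hxyD j
      set z : Fin r → ℚ := y + (δ/d) • (y - x) with hzdef
      set t : ℚ := d/(d+δ) with htdef
      have hdδ : (0:ℚ) < d + δ := by linarith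
      have ht0 : 0 ≤ t := le_of_lt (div_pos hdpos hdδ)
      have ht1 : t ≤ 1 := by rw [htdef, div_le_one hdδ]; linarith
      have hz_ball : ∀ i, |z i - x0 i| ≤ 2*δ := by
        intro i
        have h1 : z i - x0 i = (y i - x0 i) + (δ/d)*(y i - x i) := by
          simp only [hzdef, Pi.add_apply, Pi.smul_apply, Pi.sub_apply, smul_eq_mul]
          ring
        have h2 : |(δ/d)*(y i - x i)| ≤ δ := by
          rw [abs_mul, abs_of_nonneg (le_of_lt (div_pos hδ hdpos))]
          have hle : |y i - x i| ≤ d := by rw [abs_sub_comm]; exact hdle i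
          calc (δ/d)*|y i - x i| ≤ (δ/d)*d :=
                mul_le_mul_of_nonneg_left hle (by positivity)
            _ = δ := div_mul_cancel₀ δ (ne_of_gt hdpos)
        calc |z i - x0 i| ≤ |y i - x0 i| + |(δ/d)*(y i - x i)| := by
              rw [h1]; exact abs_add_le _ _
          _ ≤ δ + δ := add_le_add (hy i) h2
          _ = 2*δ := by ring
      have hx_ball : ∀ i, |x i - x0 i| ≤ 2*δ := fun i => le_trans (hx i) (by linarith)
      have hy_eq : t • z + (1 - t) • x = y := by
        funext i
        simp only [hzdef, htdef, Pi.add_apply, Pi.smul_apply, Pi.sub_apply, smul_eq_mul]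
        field_simp
        ring
      have hFz : F f z ≤ M := hM z hz_ball
      have hFx : m ≤ F f x := hm x hx_ball
      have hF := Fconv hconv hreal z x (mem_box_near x0 δ hbox z hz_ball)
        (mem_box_near x0 δ hbox x hx_ball) t ht0 ht1
      rw [hy_eq] at hF
      have hdR : (0:ℝ) < (d:ℝ) := by exact_mod_cast hdpos
      have htr : ((t:ℚ):ℝ) = (d:ℝ)/((d:ℝ)+(δ:ℝ)) := by rw [htdef]; push_cast; ring
      have htr0 : (0:ℝ) ≤ (t:ℝ) := by exact_mod_cast ht0
      have htr1 : (t:ℝ) ≤ 1 := by exact_mod_cast ht1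
      have ht_le : (t:ℝ) ≤ (d:ℝ)/(δ:ℝ) := by
        rw [htr, div_le_div_iff₀ (by linarith) hδR]
        nlinarith
      have step1 : F f y - F f x ≤ (t:ℝ) * (M - m) := by
        nlinarith [mul_nonneg htr0 (sub_nonneg.mpr hFz), hF, hFz, hFx,
          mul_le_mul_of_nonneg_left hFz htr0, mul_le_mul_of_nonneg_left hFx htr0]
      have step2 : (t:ℝ)*(M-m) ≤ ((d:ℝ)/(δ:ℝ))*(M-m) := mul_le_mul_of_nonneg_right ht_le hMm
      have step3 : ((d:ℝ)/(δ:ℝ))*(M-m) = K * (d:ℝ) := by rw [hKdef]; field_simp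
      have step4 : K*(d:ℝ) ≤ K*D := mul_le_mul_of_nonneg_left hdD hK
      exact le_trans step1 (le_trans step2 (le_trans (le_of_eq step3) step4))
  intro x y hx hy D hD hxyD
  rw [abs_sub_le_iff]
  exact ⟨S y x hy hx D hD (fun i => by rw [abs_sub_comm]; exact hxyD i),
    S x y hx hy D hD hxyD⟩
lemma neBot_comap (z : Fin r → ℝ) : (comap (emb (r := r)) (𝓝 z)).NeBot := by
  rw [comap_neBot_iff]
  intro s hs
  obtain ⟨ε, hε, hball⟩ := Metric.mem_nhds_iff.mp hs
  choose q hq using fun i => exists_rat_near (z i) (half_pos hε)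
  refine ⟨q, hball ?_⟩
  rw [Metric.mem_ball, dist_comm, dist_pi_lt_iff hε]
  intro i
  rw [Real.dist_eq]
  exact lt_trans (hq i) (half_lt_self hε)

lemma near_mem (z : Fin r → ℝ) {η : ℝ} (hη : 0 < η) :
    emb ⁻¹' {w | ∀ i, |w i - z i| < η} ∈ comap (emb (r := r)) (𝓝 z) := by
  apply preimage_mem_comap
  have hsub : Metric.ball z η ⊆ {w | ∀ i, |w i - z i| < η} := by
    intro w hw i
    have h := dist_le_pi_dist w z i
    rw [Real.dist_eq] at h
    exact lt_of_le_of_lt h hw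
  exact mem_of_superset (Metric.ball_mem_nhds z hη) hsub

lemma lip_ball [Nonempty (Fin r)] (hconv : ConvHyp f) (hreal : RealHyp f c)
    {z : Fin r → ℝ} (hz : z ∈ box c) :
    ∃ η K : ℝ, 0 < η ∧ 0 ≤ K ∧ ∀ x y : Fin r → ℚ,
      (∀ i, |(x i:ℝ) - z i| < η) → (∀ i, |(y i:ℝ) - z i| < η) →
      ∀ D:ℝ, 0 ≤ D → (∀ i, |(x i:ℝ) - (y i:ℝ)| ≤ D) → |F f x - F f y| ≤ K*D := by
  have hne : (Finset.univ : Finset (Fin r)).Nonempty := Finset.univ_nonempty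
  set ρ : ℝ := Finset.univ.inf' hne (fun i => z i + c) with hρdef
  obtain ⟨j, -, hρj⟩ := Finset.exists_mem_eq_inf' hne (fun i => z i + c)
  have hρpos : 0 < ρ := by rw [hρdef, hρj]; have := hz j; linarith
  have hρle : ∀ i, ρ ≤ z i + c := fun i => Finset.inf'_le (fun i => z i + c) (Finset.mem_univ i)
  obtain ⟨δ, hδ0, hδρ⟩ := exists_rat_btwn (show (0:ℝ) < ρ/4 by linarith)
  have hδQ : (0:ℚ) < δ := by exact_mod_cast hδ0
  choose x0 hx0 using fun i => exists_rat_near (z i) (show (0:ℝ) < (δ:ℝ)/2 by linarith)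
  have hbox : ∀ i, -c < (x0 i:ℝ) - 2*(δ:ℝ) := by
    intro i
    have h2 := abs_lt.mp (hx0 i)
    have h3 := hρle i
    linarith
  obtain ⟨K, hK, hlip⟩ := lip hconv hreal x0 δ hδQ hbox
  refine ⟨(δ:ℝ)/2, K, by linarith, hK, ?_⟩
  intro x y hxz hyz D hD hxyD
  have hball : ∀ (w : Fin r → ℚ), (∀ i, |(w i:ℝ) - z i| < (δ:ℝ)/2) →
      ∀ i, |w i - x0 i| ≤ δ := by
    intro w hw i
    have h1 := abs_lt.mp (hw i)
    have h2 := abs_lt.mp (hx0 i)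
    have h3 : |(w i:ℝ) - (x0 i:ℝ)| ≤ (δ:ℝ) := by rw [abs_le]; constructor <;> linarith
    exact_mod_cast h3
  exact hlip x y (hball x hxz) (hball y hyz) D hD hxyD

noncomputable def g (f : (Fin r → ℚ) → WithTop ℝ) : (Fin r → ℝ) → ℝ :=
  fun z => limUnder (comap emb (𝓝 z)) (F f)

lemma tendsto_g [Nonempty (Fin r)] (hconv : ConvHyp f) (hreal : RealHyp f c)
    {z : Fin r → ℝ} (hz : z ∈ box c) :
    Tendsto (F f) (comap emb (𝓝 z)) (𝓝 (g f z)) := by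
  obtain ⟨η, K, hη, hK, hlip⟩ := lip_ball hconv hreal hz
  have hc2 : Cauchy (map (F f) (comap (emb (r := r)) (𝓝 z))) := by
    rw [Metric.cauchy_iff]
    refine ⟨(neBot_comap z).map _, ?_⟩
    intro ε hε
    set η' : ℝ := min η (ε/(2*K+1)) with hη'def
    have hη' : 0 < η' := lt_min hη (by positivity)
    refine ⟨F f '' (emb ⁻¹' {w | ∀ i, |w i - z i| < η'}), image_mem_map (near_mem z hη'), ?_⟩
    rintro u ⟨q, hq, rfl⟩ v ⟨q', hq', rfl⟩
    simp only [Set.mem_preimage, Set.mem_setOf_eq, emb] at hq hq'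
    rw [Real.dist_eq]
    have hd : |F f q - F f q'| ≤ K * (2*η') := by
      apply hlip q q'
      · intro i; exact lt_of_lt_of_le (hq i) (min_le_left _ _)
      · intro i; exact lt_of_lt_of_le (hq' i) (min_le_left _ _)
      · positivity
      · intro i
        have h1 := hq i
        have h2 := hq' i
        have : |(q i:ℝ) - (q' i:ℝ)| ≤ |(q i:ℝ) - z i| + |z i - (q' i:ℝ)| := by
          calc |(q i:ℝ) - (q' i:ℝ)| = |((q i:ℝ) - z i) + (z i - (q' i:ℝ))| := by ring_nf
            _ ≤ _ := abs_add_le _ _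
        rw [abs_sub_comm (z i)] at this
        linarith
    have hlt : K * (2*η') < ε := by
      have h1 : η' ≤ ε/(2*K+1) := min_le_right _ _
      have h2 : K * (2*η') ≤ K * (2*(ε/(2*K+1))) := by nlinarith
      have h3 : K * (2*(ε/(2*K+1))) < ε := by
        rw [show K * (2*(ε/(2*K+1))) = (2*K)*ε/(2*K+1) by ring, div_lt_iff₀ (by linarith)]
        nlinarith
      linarith
    linarith
  obtain ⟨L, hL⟩ := CompleteSpace.complete hc2
  exact tendsto_nhds_limUnder ⟨L, hL⟩

lemma g_emb [Nonempty (Fin r)] (hconv : ConvHyp f) (hreal : RealHyp f c)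
    (x : Fin r → ℚ) (hx : emb x ∈ box c) : g f (emb x) = F f x := by
  have h1 := tendsto_g hconv hreal hx
  have h2 : Tendsto (F f) (comap (emb (r := r)) (𝓝 (emb x))) (𝓝 (F f x)) := by
    obtain ⟨η, K, hη, hK, hlip⟩ := lip_ball hconv hreal hx
    rw [Metric.tendsto_nhds]
    intro ε hε
    set η' : ℝ := min η (ε/(K+1)) with hη'def
    have hη' : 0 < η' := lt_min hη (by positivity)
    filter_upwards [near_mem (emb x) hη'] with q hq
    simp only [Set.mem_preimage, Set.mem_setOf_eq, emb] at hq
    rw [Real.dist_eq]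
    have hd : |F f q - F f x| ≤ K * η' := by
      apply hlip q x
      · intro i; exact lt_of_lt_of_le (hq i) (min_le_left _ _)
      · intro i; simpa [emb] using hη
      · exact hη'.le
      · intro i; exact le_of_lt (hq i)
    have hlt : K * η' < ε := by
      have h1 : η' ≤ ε/(K+1) := min_le_right _ _
      have h2 : K * η' ≤ K * (ε/(K+1)) := by nlinarith
      have h3 : K * (ε/(K+1)) < ε := by
        rw [show K * (ε/(K+1)) = K*ε/(K+1) by ring, div_lt_iff₀ (by linarith)]
        nlinarith
      linarith
    linarith
  haveI := neBot_comap (r := r) (emb x)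
  exact tendsto_nhds_unique h1 h2

lemma g_close [Nonempty (Fin r)] (hconv : ConvHyp f) (hreal : RealHyp f c)
    {z z' : Fin r → ℝ} (hz : z ∈ box c) (hz' : z' ∈ box c)
    {η K : ℝ} (hη : 0 < η) (hK : 0 ≤ K)
    (hlip : ∀ x y : Fin r → ℚ,
      (∀ i, |(x i:ℝ) - z i| < η) → (∀ i, |(y i:ℝ) - z i| < η) →
      ∀ D:ℝ, 0 ≤ D → (∀ i, |(x i:ℝ) - (y i:ℝ)| ≤ D) → |F f x - F f y| ≤ K*D)
    {D : ℝ} (hD : 0 ≤ D) (hDη : D < η) (hzz' : ∀ i, |z' i - z i| ≤ D) :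
    |g f z - g f z'| ≤ K * D := by
  have main : ∀ s : ℝ, 0 < s → |g f z - g f z'| ≤ K * D + s := by
    intro s hs
    set s' : ℝ := min ((η - D)/2) (s/(2*K+1)) with hs'def
    have hs'pos : 0 < s' := lt_min (by linarith) (by positivity)
    have hs'1 : s' ≤ (η - D)/2 := min_le_left _ _
    have hs'2 : s' ≤ s/(2*K+1) := min_le_right _ _
    have key : |g f z - g f z'| ≤ K * (D + 2*s') := by
      set C : Set (ℝ × ℝ) := {p | |p.1 - p.2| ≤ K*(D+2*s')} with hCdef
      have hC : IsClosed C := isClosed_le ((continuous_fst.sub continuous_snd).abs)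
        continuous_const
      haveI := neBot_comap (r := r) z
      haveI := neBot_comap (r := r) z'
      have ht : Tendsto (Prod.map (F f) (F f))
          ((comap emb (𝓝 z)) ×ˢ (comap emb (𝓝 z'))) (𝓝 (g f z, g f z')) := by
        rw [nhds_prod_eq]
        exact Tendsto.prodMap (tendsto_g hconv hreal hz) (tendsto_g hconv hreal hz')
      have hev : ∀ᶠ p in (comap (emb (r := r)) (𝓝 z)) ×ˢ (comap (emb (r := r)) (𝓝 z')),
          Prod.map (F f) (F f) p ∈ C := by
        apply eventually_of_mem (prod_mem_prod (near_mem z hs'pos) (near_mem z' hs'pos))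
        rintro ⟨q, q'⟩ ⟨hq, hq'⟩
        simp only [Set.mem_preimage, Set.mem_setOf_eq, emb] at hq hq'
        show |F f q - F f q'| ≤ K*(D+2*s')
        apply hlip q q'
        · intro i; exact lt_of_lt_of_le (hq i) (by linarith)
        · intro i
          have h1 := hq' i
          have h2 := hzz' i
          have : |(q' i:ℝ) - z i| ≤ |(q' i:ℝ) - z' i| + |z' i - z i| := by
            calc |(q' i:ℝ) - z i| = |((q' i:ℝ) - z' i) + (z' i - z i)| := by ring_nf
              _ ≤ _ := abs_add_le _ _
          calc |(q' i:ℝ) - z i| ≤ |(q' i:ℝ) - z' i| + |z' i - z i| := this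
            _ < s' + D := by linarith
            _ < η := by linarith
        · positivity
        · intro i
          have h1 := hq i
          have h2 := hq' i
          have h3 := hzz' i
          have e1 : |(q i:ℝ) - (q' i:ℝ)| ≤ |(q i:ℝ) - z i| + |z i - z' i| + |z' i - (q' i:ℝ)| := by
            calc |(q i:ℝ) - (q' i:ℝ)|
                = |((q i:ℝ) - z i) + ((z i - z' i) + (z' i - (q' i:ℝ)))| := by ring_nf
              _ ≤ |(q i:ℝ) - z i| + |(z i - z' i) + (z' i - (q' i:ℝ))| := abs_add_le _ _
              _ ≤ |(q i:ℝ) - z i| + (|z i - z' i| + |z' i - (q' i:ℝ)|) := by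
                  have := abs_add_le (z i - z' i) (z' i - (q' i:ℝ))
                  linarith
              _ = _ := by ring
          have h4 : |z i - z' i| = |z' i - z i| := abs_sub_comm _ _
          have h5 : |z' i - (q' i:ℝ)| = |(q' i:ℝ) - z' i| := abs_sub_comm _ _
          linarith
      exact hC.mem_of_tendsto ht hev
    have hKs : K * (2*s') ≤ s := by
      have e0 : (0:ℝ) < 2*K+1 := by linarith
      have e : s/(2*K+1)*(2*K+1) = s := div_mul_cancel₀ _ (ne_of_gt e0)
      nlinarith [mul_le_mul_of_nonneg_left hs'2 hK, hs, hK, hs'pos]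
    calc |g f z - g f z'| ≤ K * (D + 2*s') := key
      _ = K * D + K * (2*s') := by ring
      _ ≤ K * D + s := by linarith
  exact le_of_forall_pos_le_add main

lemma g_contOn [Nonempty (Fin r)] (hconv : ConvHyp f) (hreal : RealHyp f c) :
    ContinuousOn (g f) (box c) := by
  intro z hz
  obtain ⟨η, K, hη, hK, hlip⟩ := lip_ball hconv hreal hz
  rw [Metric.continuousWithinAt_iff]
  intro ε hε
  refine ⟨min (η/2) (ε/(2*(K+1))), lt_min (by linarith) (by positivity), ?_⟩
  intro z' hz' hdist
  have hd1 : dist z' z < η/2 := lt_of_lt_of_le hdist (min_le_left _ _)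
  have hd2 : dist z' z < ε/(2*(K+1)) := lt_of_lt_of_le hdist (min_le_right _ _)
  have hcoord : ∀ i, |z' i - z i| ≤ dist z' z := by
    intro i
    have := dist_le_pi_dist z' z i
    rwa [Real.dist_eq] at this
  have hgd : |g f z - g f z'| ≤ K * dist z' z :=
    g_close hconv hreal hz hz' hη hK hlip dist_nonneg (by linarith) hcoord
  rw [Real.dist_eq, abs_sub_comm]
  have : K * dist z' z ≤ K * (ε/(2*(K+1))) := by nlinarith
  have hfin : K * (ε/(2*(K+1))) < ε := by
    rw [show K * (ε/(2*(K+1))) = K*ε/(2*(K+1)) by ring, div_lt_iff₀ (by linarith)]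
    nlinarith
  linarith
end

end Stmt18

/-- Let `f : ℚ^r → ℝ ∪ {∞}` be convex over `ℚ`
(`f(t·x + (1−t)·y) ≤ t·f(x) + (1−t)·f(y)` for `x, y ∈ ℚ^r`, `t ∈ [0,1] ∩ ℚ`), real-valued
on `(−c, ∞)^r ∩ ℚ^r` for some `c > 0`.  Then there is a continuous `f̃ : (−c, ∞)^r → ℝ`
with `f̃ = f` on `(−c, ∞)^r ∩ ℚ^r`; in particular `lim_{x→0, x∈ℚ^r} f(x) = f(0)`. -/
theorem stmt18 {r : ℕ} (f : (Fin r → ℚ) → WithTop ℝ) (c : ℝ) (hc : 0 < c)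
    (hconv : ∀ x y : Fin r → ℚ, ∀ t : ℚ, 0 ≤ t → t ≤ 1 →
      f (t • x + (1 - t) • y) ≤ ((t : ℝ) : WithTop ℝ) * f x
        + (((1 - t : ℚ) : ℝ) : WithTop ℝ) * f y)
    (hreal : ∀ x : Fin r → ℚ, (∀ i, -c < (x i : ℝ)) → f x ≠ ⊤) :
    ∃ g : (Fin r → ℝ) → ℝ,
      ContinuousOn g {z : Fin r → ℝ | ∀ i, -c < z i} ∧
      (∀ x : Fin r → ℚ, (∀ i, -c < (x i : ℝ)) →
        f x = ((g fun i => (x i : ℝ)) : WithTop ℝ)) ∧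
      (∀ ε : ℝ, 0 < ε → ∃ δ : ℝ, 0 < δ ∧ ∀ x : Fin r → ℚ,
        (∀ i, |(x i : ℝ)| < δ) →
          ∃ yval : ℝ, f x = (yval : WithTop ℝ) ∧ |yval - g 0| < ε) ∧
      f 0 = ((g 0 : ℝ) : WithTop ℝ) := by
  classical
  rcases Nat.eq_zero_or_pos r with hr | hr
  · subst hr
    have h0 : f 0 ≠ ⊤ := hreal 0 (fun i => i.elim0)
    obtain ⟨y0, hy0⟩ := WithTop.ne_top_iff_exists.mp h0
    refine ⟨fun _ => y0, continuousOn_const, ?_, ?_, ?_⟩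
    · intro x _
      rw [Subsingleton.elim x 0]
      exact hy0.symm
    · intro ε hε
      refine ⟨1, one_pos, fun x _ => ⟨y0, ?_, by simpa using hε⟩⟩
      rw [Subsingleton.elim x 0]
      exact hy0.symm
    · exact hy0.symm
  · haveI : Nonempty (Fin r) := Fin.pos_iff_nonempty.mp hr
    have hconv' : Stmt18.ConvHyp f := hconv
    have hreal' : Stmt18.RealHyp f c := hreal
    have hboxeq : {z : Fin r → ℝ | ∀ i, -c < z i} = Stmt18.box c := rfl
    refine ⟨Stmt18.g f, ?_, ?_, ?_, ?_⟩
    · rw [hboxeq]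
      exact Stmt18.g_contOn hconv' hreal'
    · intro x hx
      have hx' : Stmt18.emb x ∈ Stmt18.box c := hx
      rw [Stmt18.f_eq hreal' x hx']
      exact congrArg (fun t : ℝ => (t : WithTop ℝ)) (Stmt18.g_emb hconv' hreal' x hx').symm
    · intro ε hε
      have h0box : (0 : Fin r → ℝ) ∈ Stmt18.box c := fun i => by
        simpa using (neg_lt_zero.mpr hc)
      have hcw := (Stmt18.g_contOn (c := c) hconv' hreal') 0 h0box
      rw [Metric.continuousWithinAt_iff] at hcw
      obtain ⟨d, hd, hball⟩ := hcw ε hε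
      refine ⟨min d c, lt_min hd hc, ?_⟩
      intro x hx
      have hxc : ∀ i, |(x i : ℝ)| < c := fun i => lt_of_lt_of_le (hx i) (min_le_right _ _)
      have hxd : ∀ i, |(x i : ℝ)| < d := fun i => lt_of_lt_of_le (hx i) (min_le_left _ _)
      have hxbox : Stmt18.emb x ∈ Stmt18.box c := by
        intro i
        have := abs_lt.mp (hxc i)
        exact this.1
      have hdist : dist (Stmt18.emb x) (0 : Fin r → ℝ) < d := by
        rw [dist_pi_lt_iff hd]
        intro i
        simpa [Stmt18.emb, Real.dist_eq, ← Rat.norm_cast_real, Real.norm_eq_abs] using hxd i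
      have hclose := hball hxbox hdist
      rw [Real.dist_eq] at hclose
      refine ⟨Stmt18.g f (Stmt18.emb x), ?_, hclose⟩
      rw [Stmt18.f_eq hreal' x hxbox]
      exact congrArg (fun t : ℝ => (t : WithTop ℝ)) (Stmt18.g_emb hconv' hreal' x hxbox).symm
    · have h0box : (0 : Fin r → ℝ) ∈ Stmt18.box c := fun i => by
        simpa using (neg_lt_zero.mpr hc)
      have hemb0 : Stmt18.emb (0 : Fin r → ℚ) = (0 : Fin r → ℝ) := by
        funext i; simp [Stmt18.emb]
      have h0box' : Stmt18.emb (0 : Fin r → ℚ) ∈ Stmt18.box c := by rw [hemb0]; exact h0box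
      have hg := Stmt18.g_emb hconv' hreal' 0 h0box'
      rw [hemb0] at hg
      rw [Stmt18.f_eq hreal' 0 h0box']
      exact congrArg (fun t : ℝ => (t : WithTop ℝ)) hg.symm
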